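/- The determinant of the 4×4 covariance matrix K = [[Q, 0, ρ2√(QV2), ρ3√(QP)],[0, V1, ρ4√(V1V2), ρ5√(V1P)],[ρ2√(QV2), ρ4√(V1V2), V2, ρ6√(V2P)],[ρ3√(QP), ρ5√(V1P), ρ6√(V2P), P]] with ρ6 = ρ2ρ3 + ρ4ρ5 equals Q·V1·V2·P·(−1 + ρ2² + ρ4²)·(−1 + ρ3² + ρ5²). -/

import Mathlib

open Real Matrix

/-- Determinant of the 4×4 covariance matrix `K` of `(X0, W1, W2, U1)` with
`X0 ⊥ W1` and `ρ6 = ρ2ρ3 + ρ4ρ5` equals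
`Q·V1·V2·P·(−1 + ρ2² + ρ4²)·(−1 + ρ3² + ρ5²)`. -/
theorem cov4_det_identity
    (Q V1 V2 P ρ2 ρ3 ρ4 ρ5 ρ6 : ℝ)
    (hQ : 0 < Q) (hV1 : 0 < V1) (hV2 : 0 < V2) (hP : 0 < P)
    (hρ2 : ρ2 ∈ Set.Icc (-1 : ℝ) 1) (hρ3 : ρ3 ∈ Set.Icc (-1 : ℝ) 1)
    (hρ4 : ρ4 ∈ Set.Icc (-1 : ℝ) 1) (hρ5 : ρ5 ∈ Set.Icc (-1 : ℝ) 1)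
    (hρ6 : ρ6 = ρ2 * ρ3 + ρ4 * ρ5) :
    Matrix.det
      !![Q, 0, ρ2 * Real.sqrt (Q * V2), ρ3 * Real.sqrt (Q * P);
         0, V1, ρ4 * Real.sqrt (V1 * V2), ρ5 * Real.sqrt (V1 * P);
         ρ2 * Real.sqrt (Q * V2), ρ4 * Real.sqrt (V1 * V2), V2, ρ6 * Real.sqrt (V2 * P);
         ρ3 * Real.sqrt (Q * P), ρ5 * Real.sqrt (V1 * P), ρ6 * Real.sqrt (V2 * P), P] =
    Q * V1 * V2 * P * (-1 + ρ2 ^ 2 + ρ4 ^ 2) * (-1 + ρ3 ^ 2 + ρ5 ^ 2) := by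
  obtain ⟨q, hq, hQ'⟩ : ∃ q : ℝ, 0 ≤ q ∧ Q = q ^ 2 :=
    ⟨Real.sqrt Q, Real.sqrt_nonneg _, (Real.sq_sqrt hQ.le).symm⟩
  obtain ⟨v1, hv1, hV1'⟩ : ∃ v : ℝ, 0 ≤ v ∧ V1 = v ^ 2 :=
    ⟨Real.sqrt V1, Real.sqrt_nonneg _, (Real.sq_sqrt hV1.le).symm⟩
  obtain ⟨v2, hv2, hV2'⟩ : ∃ v : ℝ, 0 ≤ v ∧ V2 = v ^ 2 :=
    ⟨Real.sqrt V2, Real.sqrt_nonneg _, (Real.sq_sqrt hV2.le).symm⟩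
  obtain ⟨p, hp, hP'⟩ : ∃ v : ℝ, 0 ≤ v ∧ P = v ^ 2 :=
    ⟨Real.sqrt P, Real.sqrt_nonneg _, (Real.sq_sqrt hP.le).symm⟩
  subst hQ' hV1' hV2' hP' hρ6
  rw [show q ^ 2 * v2 ^ 2 = (q * v2) ^ 2 by ring,
      show q ^ 2 * p ^ 2 = (q * p) ^ 2 by ring,
      show v1 ^ 2 * v2 ^ 2 = (v1 * v2) ^ 2 by ring,
      show v1 ^ 2 * p ^ 2 = (v1 * p) ^ 2 by ring,
      show v2 ^ 2 * p ^ 2 = (v2 * p) ^ 2 by ring,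
      Real.sqrt_sq (by positivity), Real.sqrt_sq (by positivity),
      Real.sqrt_sq (by positivity), Real.sqrt_sq (by positivity),
      Real.sqrt_sq (by positivity)]
  simp [Matrix.det_succ_row_zero, Fin.sum_univ_succ, Fin.succAbove, Fin.castSucc, Fin.castAdd, Fin.castLE]
  ring
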